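/- Let n be a positive integer, Q ⊆ ℝⁿ a closed axis-parallel cube, f₀ : K → ℝⁿ continuous on a compact metric space K with f₀(K) ⊆ Q, C ⊆ K a compact subset homeomorphic to the Cantor set, and U an open set with C ⊆ U ⊆ K. Then there exists a continuous f : K → Q such that f = f₀ on K \ U and f(C) = Q; in particular f(K) = Q if f₀(K) ⊆ Q. -/

import Mathlib

open Filter Topology

noncomputable def cstep (r : ℝ) : ℝ := if 1/2 ≤ r then 2*r - 1 else 2*r
noncomputable def crem (y : ℝ) (k : ℕ) : ℝ := cstep^[k] y
noncomputable def cdig (y : ℝ) (k : ℕ) : Bool := decide (1/2 ≤ crem y k)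
noncomputable def phi (x : ℕ → Bool) : ℝ := ∑' k, if x k then (1/2:ℝ)^(k+1) else 0

lemma summable_geom_half : Summable (fun k : ℕ => (1/2:ℝ)^(k+1)) := by
  simpa [Function.comp_def] using (summable_geometric_two).comp_injective (add_left_injective 1)

lemma summable_phi (x : ℕ → Bool) : Summable (fun k => if x k then (1/2:ℝ)^(k+1) else 0) := by
  refine Summable.of_nonneg_of_le (fun k => by positivity) ?_ summable_geom_half
  intro k; split
  · exact le_rfl
  · positivity

lemma phi_nonneg (x : ℕ → Bool) : 0 ≤ phi x :=
  tsum_nonneg fun k => by positivity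

lemma tsum_half : ∑' k : ℕ, (1/2:ℝ)^(k+1) = 1 := by
  have h : (fun k : ℕ => (1/2:ℝ)^(k+1)) = fun k : ℕ => (1:ℝ)/2/2^k := by
    ext k; rw [pow_succ, div_pow, one_pow]; ring
  rw [h]; exact tsum_geometric_two' 1

lemma phi_le_one (x : ℕ → Bool) : phi x ≤ 1 := by
  rw [← tsum_half]
  apply Summable.tsum_le_tsum _ (summable_phi x) summable_geom_half
  intro k; split
  · exact le_rfl
  · positivity

lemma continuous_phi : Continuous phi := by
  apply continuous_tsum (u := fun k => (1/2:ℝ)^(k+1))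
  · intro k
    exact Continuous.comp (continuous_of_discreteTopology
      (f := fun b : Bool => if b then (1/2:ℝ)^(k+1) else 0)) (continuous_apply k)
  · exact summable_geom_half
  · intro k x; rw [Real.norm_eq_abs]
    split
    · rw [abs_of_nonneg (by positivity)]
    · rw [abs_zero]; positivity

open Filter Topology Finset

lemma cstep_mem {r : ℝ} (h : r ∈ Set.Icc (0:ℝ) 1) : cstep r ∈ Set.Icc (0:ℝ) 1 := by
  obtain ⟨h0, h1⟩ := h
  unfold cstep
  split <;> constructor <;> linarith

lemma crem_mem {y : ℝ} (h : y ∈ Set.Icc (0:ℝ) 1) (k : ℕ) : crem y k ∈ Set.Icc (0:ℝ) 1 := by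
  induction k with
  | zero => exact h
  | succ k ih =>
    rw [crem, Function.iterate_succ_apply'] at *
    exact cstep_mem ih

lemma crem_succ (y : ℝ) (k : ℕ) : crem y (k+1) = cstep (crem y k) := by
  rw [crem, Function.iterate_succ_apply']; rfl

lemma partial_sum_eq (y : ℝ) (N : ℕ) :
    ∑ k ∈ Finset.range N, (if cdig y k then (1/2:ℝ)^(k+1) else 0)
      = y - crem y N * (1/2)^N := by
  induction N with
  | zero => simp [crem]
  | succ N ih =>
    rw [Finset.sum_range_succ, ih, crem_succ, cstep, cdig]
    by_cases h : 1/2 ≤ crem y N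
    · rw [if_pos h, if_pos (by simpa using h)]; ring
    · rw [if_neg h, if_neg (by simpa using h)]; ring

lemma phi_cdig {y : ℝ} (h : y ∈ Set.Icc (0:ℝ) 1) : phi (cdig y) = y := by
  have hs := summable_phi (cdig y)
  have ht : Tendsto (fun N => ∑ k ∈ Finset.range N, (if cdig y k then (1/2:ℝ)^(k+1) else 0))
      atTop (nhds y) := by
    simp_rw [partial_sum_eq]
    have h2 : Tendsto (fun N : ℕ => crem y N * (1/2:ℝ)^N) atTop (nhds 0) := by
      have hb : ∀ N : ℕ, crem y N * (1/2:ℝ)^N ≤ (1/2:ℝ)^N := fun N => by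
        calc crem y N * (1/2:ℝ)^N ≤ 1 * (1/2:ℝ)^N :=
              mul_le_mul_of_nonneg_right (crem_mem h N).2 (by positivity)
          _ = (1/2:ℝ)^N := one_mul _
      exact squeeze_zero (fun N => mul_nonneg (crem_mem h N).1 (by positivity)) hb
        (tendsto_pow_atTop_nhds_zero_of_lt_one (by norm_num) (by norm_num))
    simpa using tendsto_const_nhds.sub h2
  exact ((hs.hasSum_iff_tendsto_nat).mpr ht).tsum_eq
open scoped ENNReal NNReal

theorem stmt19 {K : Type*} [MetricSpace K] [CompactSpace K] (n : ℕ) (hn : 0 < n)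
    (a : Fin n → ℝ) (c : ℝ) (hc : 0 ≤ c)
    (f₀ : C(K, EuclideanSpace ℝ (Fin n)))
    (hf₀ : ∀ x, ∀ i, f₀ x i ∈ Set.Icc (a i) (a i + c))
    (C : Set K) (hC : IsCompact C) (hhomeo : Nonempty (↥C ≃ₜ (ℕ → Bool)))
    (U : Set K) (hU : IsOpen U) (hCU : C ⊆ U) :
    ∃ f : K → EuclideanSpace ℝ (Fin n), Continuous f ∧
      (∀ x, ∀ i, f x i ∈ Set.Icc (a i) (a i + c)) ∧
      Set.EqOn f (⇑f₀) Uᶜ ∧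
      f '' C = {y : EuclideanSpace ℝ (Fin n) | ∀ i, y i ∈ Set.Icc (a i) (a i + c)} ∧
      Set.range f = {y : EuclideanSpace ℝ (Fin n) | ∀ i, y i ∈ Set.Icc (a i) (a i + c)} := by
  classical
  obtain ⟨e⟩ := hhomeo
  set Q : Set (EuclideanSpace ℝ (Fin n)) := {y | ∀ i, y i ∈ Set.Icc (a i) (a i + c)} with hQ
  -- the Cantor-to-cube surjection
  set ψ : (ℕ → Bool) → EuclideanSpace ℝ (Fin n) :=
    fun x => WithLp.toLp 2 (fun i => a i + c * phi (fun k => x (n * k + i.val))) with hψ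
  have hψcont : Continuous ψ := by
    apply (PiLp.continuous_toLp 2 _).comp
    apply continuous_pi
    intro i
    exact continuous_const.add (continuous_const.mul
      (continuous_phi.comp (continuous_pi fun k => continuous_apply (n * k + i.val))))
  have hψmem : ∀ x i, ψ x i ∈ Set.Icc (a i) (a i + c) := by
    intro x i
    have h1 := mul_nonneg hc (phi_nonneg (fun k => x (n * k + i.val)))
    have h2 := mul_le_of_le_one_right hc (phi_le_one (fun k => x (n * k + i.val)))
    simp only [hψ, PiLp.toLp_apply]
    exact ⟨by linarith, by linarith⟩
  have hψsurj : ∀ y ∈ Q, ∃ x, ψ x = y := by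
    intro y hy
    set t : Fin n → ℝ := fun i => if c = 0 then 0 else (y i - a i) / c with ht
    have htmem : ∀ i, t i ∈ Set.Icc (0:ℝ) 1 := by
      intro i
      obtain ⟨h1, h2⟩ := hy i
      rw [ht]
      split
      · exact ⟨le_rfl, zero_le_one⟩
      · rename_i hc0
        have hcpos : 0 < c := lt_of_le_of_ne hc (Ne.symm hc0)
        constructor
        · exact div_nonneg (by linarith) hc
        · rw [div_le_one hcpos]; linarith
    have hti : ∀ i, a i + c * t i = y i := by
      intro i
      rw [ht]
      split
      · rename_i hc0
        obtain ⟨h1, h2⟩ := hy i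
        rw [hc0] at *; simp; linarith
      · rename_i hc0
        field_simp
        ring
    refine ⟨fun m => cdig (t ⟨m % n, Nat.mod_lt m hn⟩) (m / n), ?_⟩
    ext i
    have hkey : (fun k => cdig (t ⟨(n * k + i.val) % n, Nat.mod_lt _ hn⟩) ((n * k + i.val) / n))
        = cdig (t i) := by
      funext k
      have h1 : (n * k + i.val) % n = i.val := by
        rw [Nat.mul_add_mod, Nat.mod_eq_of_lt i.isLt]
      have h2 : (n * k + i.val) / n = k := by
        rw [Nat.mul_add_div hn, Nat.div_eq_of_lt i.isLt, add_zero]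
      have h3 : (⟨(n * k + i.val) % n, Nat.mod_lt _ hn⟩ : Fin n) = i := Fin.ext h1
      simp only [h2, h3]
    rw [hψ]
    simp only [PiLp.toLp_apply, hkey]
    rw [phi_cdig (htmem i), hti]
  -- Tietze extension of ψ ∘ e coordinatewise
  have hCc : IsClosed C := hC.isClosed
  have hg : ∀ i : Fin n, Continuous (fun z : ↥C => ψ (e z) i) := by
    intro i
    exact (continuous_apply i).comp ((PiLp.continuous_ofLp 2 _).comp (hψcont.comp e.continuous))
  have hT : ∀ i : Fin n, ∃ G : C(K, ℝ), (∀ y, G y ∈ Set.Icc (a i) (a i + c)) ∧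
      G.restrict C = ⟨fun z : ↥C => ψ (e z) i, hg i⟩ := by
    intro i
    exact ContinuousMap.exists_restrict_eq_forall_mem_of_closed _
      (fun z => hψmem (e z) i) (Set.nonempty_Icc.mpr (by linarith)) hCc
  choose G hG1 hG2 using hT
  -- Urysohn function
  obtain ⟨u, hu0, hu1, hu01⟩ := exists_continuous_zero_one_of_isClosed hU.isClosed_compl hCc
    (Set.disjoint_left.mpr fun x hx hxC => hx (hCU hxC))
  -- the final map
  set f : K → EuclideanSpace ℝ (Fin n) :=
    fun x => WithLp.toLp 2 (fun i => u x * G i x + (1 - u x) * f₀ x i) with hf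
  have hfc : Continuous f := by
    apply (PiLp.continuous_toLp 2 _).comp
    apply continuous_pi
    intro i
    exact (u.continuous.mul (G i).continuous).add
      ((continuous_const.sub u.continuous).mul ((continuous_apply i).comp ((PiLp.continuous_ofLp 2 _).comp f₀.continuous)))
  have hfmem : ∀ x i, f x i ∈ Set.Icc (a i) (a i + c) := by
    intro x i
    have h01 := hu01 x
    have hcv : u x • (G i x) + (1 - u x) • (f₀ x i) ∈ Set.Icc (a i) (a i + c) :=
      (convex_Icc (a i) (a i + c)) (hG1 i x) (hf₀ x i) h01.1 (by linarith [h01.2]) (by ring)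
    simp only [hf, PiLp.toLp_apply]
    simpa [smul_eq_mul] using hcv
  have hfC : ∀ x (hx : x ∈ C), f x = ψ (e ⟨x, hx⟩) := by
    intro x hx
    ext i
    have h1 : u x = 1 := hu1 hx
    have h2 : G i x = ψ (e ⟨x, hx⟩) i := by
      have := ContinuousMap.congr_fun (hG2 i) ⟨x, hx⟩
      simpa using this
    rw [hf]
    simp only [PiLp.toLp_apply, h1, h2]
    ring
  refine ⟨f, hfc, hfmem, ?_, ?_, ?_⟩
  · intro x hx
    have h0 : u x = 0 := hu0 hx
    ext i
    rw [hf]; simp [h0]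
  · apply Set.Subset.antisymm
    · rintro _ ⟨x, hx, rfl⟩
      exact fun i => hfmem x i
    · intro y hy
      obtain ⟨x, hx⟩ := hψsurj y hy
      refine ⟨(e.symm x : ↥C), (e.symm x).2, ?_⟩
      rw [hfC _ (e.symm x).2]
      convert hx using 2
      simp
  · apply Set.Subset.antisymm
    · rintro _ ⟨x, rfl⟩
      exact fun i => hfmem x i
    · intro y hy
      obtain ⟨x, hx⟩ := hψsurj y hy
      refine ⟨(e.symm x : ↥C), ?_⟩
      rw [hfC _ (e.symm x).2]
      convert hx using 2
      simp
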